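/- Let k : ℝ → ℝ be continuously differentiable, and for t > 0 set θ(t) = t·k(t) + log t and γ(t) = ((2 − t)·cos θ(t), (2 − t)·sin θ(t)) ∈ ℝ². Then the unit tangent vector of γ converges to the unit tangent vector of the circle of radius 2 at the corresponding angle: ‖ γ'(t)/‖γ'(t)‖ − (−sin θ(t), cos θ(t)) ‖ → 0 as t → 0⁺. -/

import Mathlib

open Real Filter Topology

/-- The curve `γ(t) = ((2 − t)·cos θ(t), (2 − t)·sin θ(t))` with
`θ(t) = t·k(t) + log t`, viewed in `ℝ²` with the Euclidean norm. -/
noncomputable def windingCurve (k : ℝ → ℝ) (t : ℝ) : EuclideanSpace ℝ (Fin 2) :=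
  (WithLp.equiv 2 (Fin 2 → ℝ)).symm
    ![(2 - t) * Real.cos (t * k t + Real.log t),
      (2 - t) * Real.sin (t * k t + Real.log t)]

/-- The angular speed `θ'(t)`. -/
noncomputable def windingSpeed (k : ℝ → ℝ) (t : ℝ) : ℝ := k t + t * deriv k t + t⁻¹

lemma windingCurve_hasDerivAt (k : ℝ → ℝ) (hk : ContDiff ℝ 1 k) {t : ℝ} (ht : 0 < t) :
    HasDerivAt (windingCurve k)
      ((WithLp.equiv 2 (Fin 2 → ℝ)).symm
        ![-Real.cos (t * k t + Real.log t) -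
            (2 - t) * windingSpeed k t * Real.sin (t * k t + Real.log t),
          -Real.sin (t * k t + Real.log t) +
            (2 - t) * windingSpeed k t * Real.cos (t * k t + Real.log t)]) t := by
  have hkd : HasDerivAt k (deriv k t) t :=
    ((hk.differentiable one_ne_zero) t).hasDerivAt
  have hθ : HasDerivAt (fun t => t * k t + Real.log t) (windingSpeed k t) t := by
    have := ((hasDerivAt_id t).mul hkd).add (Real.hasDerivAt_log ht.ne')
    refine this.congr_deriv ?_
    unfold windingSpeed
    simp only [id_eq]
    ring
  have h2t : HasDerivAt (fun t : ℝ => 2 - t) (-1) t := (hasDerivAt_id t).const_sub 2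
  have hcos : HasDerivAt (fun t => Real.cos (t * k t + Real.log t))
      (-Real.sin (t * k t + Real.log t) * windingSpeed k t) t :=
    (Real.hasDerivAt_cos _).comp t hθ
  have hsin : HasDerivAt (fun t => Real.sin (t * k t + Real.log t))
      (Real.cos (t * k t + Real.log t) * windingSpeed k t) t :=
    (Real.hasDerivAt_sin _).comp t hθ
  have h1 : HasDerivAt (fun t => (2 - t) * Real.cos (t * k t + Real.log t))
      (-Real.cos (t * k t + Real.log t) -
        (2 - t) * windingSpeed k t * Real.sin (t * k t + Real.log t)) t := by
    have := h2t.mul hcos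
    refine this.congr_deriv ?_
    ring
  have h2 : HasDerivAt (fun t => (2 - t) * Real.sin (t * k t + Real.log t))
      (-Real.sin (t * k t + Real.log t) +
        (2 - t) * windingSpeed k t * Real.cos (t * k t + Real.log t)) t := by
    have := h2t.mul hsin
    refine this.congr_deriv ?_
    ring
  have hf : HasDerivAt (fun t => ![(2 - t) * Real.cos (t * k t + Real.log t),
      (2 - t) * Real.sin (t * k t + Real.log t)])
      (![-Real.cos (t * k t + Real.log t) -
            (2 - t) * windingSpeed k t * Real.sin (t * k t + Real.log t),
          -Real.sin (t * k t + Real.log t) +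
            (2 - t) * windingSpeed k t * Real.cos (t * k t + Real.log t)]) t := by
    rw [hasDerivAt_pi]
    intro i
    fin_cases i
    · simpa using h1
    · simpa using h2
  have := ((PiLp.continuousLinearEquiv 2 ℝ (fun _ : Fin 2 => ℝ)).symm
      : (Fin 2 → ℝ) →L[ℝ] EuclideanSpace ℝ (Fin 2)).hasFDerivAt.comp_hasDerivAt t hf
  exact this

/-- As `t → 0⁺`, the unit tangent vector `γ'(t)/‖γ'(t)‖` of the curve `γ` approaches
the positively oriented unit tangent vector `(−sin θ(t), cos θ(t))` of the circle at the
corresponding angle. -/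
theorem windingCurve_tangent_tendsto_circle_tangent (k : ℝ → ℝ) (hk : ContDiff ℝ 1 k) :
    Filter.Tendsto
      (fun t : ℝ =>
        ‖(‖deriv (windingCurve k) t‖)⁻¹ • deriv (windingCurve k) t -
          (WithLp.equiv 2 (Fin 2 → ℝ)).symm
            ![-Real.sin (t * k t + Real.log t), Real.cos (t * k t + Real.log t)]‖)
      (𝓝[>] (0 : ℝ)) (𝓝 0) := by
  set B : ℝ → ℝ := fun t => (2 - t) * windingSpeed k t with hBdef
  set g : ℝ → ℝ := fun t =>
    Real.sqrt (2 - 2 * (B t * (Real.sqrt (1 + B t ^ 2))⁻¹)) with hgdef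
  -- Step 1: the function agrees with `g` on `(0, ∞)`.
  have hEq : ∀ t : ℝ, 0 < t →
      ‖(‖deriv (windingCurve k) t‖)⁻¹ • deriv (windingCurve k) t -
          (WithLp.equiv 2 (Fin 2 → ℝ)).symm
            ![-Real.sin (t * k t + Real.log t), Real.cos (t * k t + Real.log t)]‖ = g t := by
    intro t ht
    set s := Real.sin (t * k t + Real.log t)
    set c := Real.cos (t * k t + Real.log t)
    set b := B t with hb
    have hder := (windingCurve_hasDerivAt k hk ht).deriv
    have hpy : s ^ 2 + c ^ 2 = 1 := Real.sin_sq_add_cos_sq _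
    have hS : (0:ℝ) < 1 + b ^ 2 := by positivity
    have hsq : Real.sqrt (1 + b ^ 2) ^ 2 = 1 + b ^ 2 := Real.sq_sqrt hS.le
    have hsqpos : 0 < Real.sqrt (1 + b ^ 2) := Real.sqrt_pos.2 hS
    set r : ℝ := (Real.sqrt (1 + b ^ 2))⁻¹ with hrdef
    have hr : r ^ 2 * (1 + b ^ 2) = 1 := by
      rw [hrdef, inv_pow, hsq]
      exact inv_mul_cancel₀ hS.ne'
    -- norm of derivative
    have hnorm : ‖deriv (windingCurve k) t‖ = Real.sqrt (1 + b ^ 2) := by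
      rw [hder, EuclideanSpace.norm_eq]
      congr 1
      simp only [WithLp.equiv_symm_apply, PiLp.toLp_apply, Fin.sum_univ_two, Matrix.cons_val_zero,
        Matrix.cons_val_one, Matrix.head_cons, Real.norm_eq_abs, sq_abs]
      rw [hb, hBdef]
      linear_combination (1 + ((2 - t) * windingSpeed k t) ^ 2) *
        Real.sin_sq_add_cos_sq (t * k t + Real.log t)
    rw [hnorm, hder, ← hrdef]
    have hcomp : ∀ i : Fin 2,
        ((r • ((WithLp.equiv 2 (Fin 2 → ℝ)).symm
            ![-c - b * s, -s + b * c]) -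
          (WithLp.equiv 2 (Fin 2 → ℝ)).symm ![-s, c]) : EuclideanSpace ℝ (Fin 2)) i =
          r * (![-c - b * s, -s + b * c] i) - (![-s, c] i) := by
      intro i
      simp [PiLp.sub_apply, PiLp.smul_apply, WithLp.equiv_symm_apply, PiLp.toLp_apply]
    have hv : ((WithLp.equiv 2 (Fin 2 → ℝ)).symm
          ![-Real.cos (t * k t + Real.log t) -
              (2 - t) * windingSpeed k t * Real.sin (t * k t + Real.log t),
            -Real.sin (t * k t + Real.log t) +
              (2 - t) * windingSpeed k t * Real.cos (t * k t + Real.log t)])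
        = (WithLp.equiv 2 (Fin 2 → ℝ)).symm ![-c - b * s, -s + b * c] := by
      rfl
    rw [hv, EuclideanSpace.norm_eq]
    simp only [hgdef]
    rw [← hb]
    congr 1
    simp only [PiLp.sub_apply, PiLp.smul_apply, WithLp.equiv_symm_apply, PiLp.toLp_apply,
      Fin.sum_univ_two, Matrix.cons_val_zero, Matrix.cons_val_one, Matrix.head_cons,
      Real.norm_eq_abs, sq_abs, smul_eq_mul]
    rw [← hrdef]
    linear_combination (r ^ 2 * (1 + b ^ 2) - 2 * r * b + 1) * hpy + hr
  -- Step 2: `B → ∞`.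
  have hB : Tendsto B (𝓝[>] (0:ℝ)) atTop := by
    have hcont : Tendsto (fun t => k t + t * deriv k t) (𝓝[>] (0:ℝ))
        (𝓝 (k 0 + 0 * deriv k 0)) := by
      refine Tendsto.mono_left ?_ nhdsWithin_le_nhds
      exact ((hk.continuous.tendsto 0).add
        ((continuous_id.tendsto 0).mul ((hk.continuous_deriv le_rfl).tendsto 0)))
    have hev : ∀ᶠ t in 𝓝[>] (0:ℝ), k 0 + 0 * deriv k 0 - 1 ≤ k t + t * deriv k t :=
      hcont.eventually (eventually_ge_nhds (by linarith))
    have hspeed : Tendsto (windingSpeed k) (𝓝[>] (0:ℝ)) atTop :=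
      tendsto_atTop_add_left_of_le' _ _ hev tendsto_inv_nhdsGT_zero
    exact Tendsto.pos_mul_atTop two_pos
      (Tendsto.mono_left ((continuous_const.sub continuous_id).tendsto' 0 2 (by norm_num))
        nhdsWithin_le_nhds) hspeed
  -- Step 3: `x * (√(1+x²))⁻¹ → 1` at `atTop`.
  have hfrac : Tendsto (fun x : ℝ => x * (Real.sqrt (1 + x ^ 2))⁻¹) atTop (𝓝 1) := by
    have h1 : Tendsto (fun x : ℝ => (1 + x ^ 2)⁻¹) atTop (𝓝 0) := by
      apply Tendsto.inv_tendsto_atTop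
      exact tendsto_atTop_add_const_left _ 1 (tendsto_pow_atTop two_ne_zero)
    have h2 : Tendsto (fun x : ℝ => Real.sqrt (1 - (1 + x ^ 2)⁻¹)) atTop (𝓝 1) := by
      have : Tendsto (fun x : ℝ => 1 - (1 + x ^ 2)⁻¹) atTop (𝓝 1) := by
        simpa using tendsto_const_nhds.sub h1
      exact (Real.continuous_sqrt.tendsto' 1 1 (by simp)).comp this
    refine h2.congr' ?_
    filter_upwards [eventually_ge_atTop (0:ℝ)] with x hx
    have hS : (0:ℝ) < 1 + x ^ 2 := by positivity
    have : 1 - (1 + x ^ 2)⁻¹ = x ^ 2 / (1 + x ^ 2) := by field_simp; ring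
    rw [this, Real.sqrt_div (by positivity), Real.sqrt_sq hx, div_eq_mul_inv]
  -- Step 4: conclude.
  have hg : Tendsto g (𝓝[>] (0:ℝ)) (𝓝 0) := by
    have hin : Tendsto (fun t => 2 - 2 * (B t * (Real.sqrt (1 + B t ^ 2))⁻¹))
        (𝓝[>] (0:ℝ)) (𝓝 0) := by
      have h := (hfrac.comp hB).const_mul (2:ℝ)
      have h2 : Tendsto (fun t => 2 - 2 * (B t * (Real.sqrt (1 + B t ^ 2))⁻¹))
          (𝓝[>] (0:ℝ)) (𝓝 (2 - 2 * 1)) := tendsto_const_nhds.sub (by exact h)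
      simpa using h2
    exact (Real.continuous_sqrt.tendsto' 0 0 (by simp)).comp hin
  refine hg.congr' ?_
  filter_upwards [self_mem_nhdsWithin] with t ht
  exact (hEq t ht).symm
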